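/- Let s(x) = 2^(−n/2)(−1)^(p(x)) with p(x) = x_{π(0)}x_{π(1)} + x_{π(1)}x_{π(2)} + ⋯ + x_{π(n−2)}x_{π(n−1)} for a permutation π of {0,...,n−1}. Then the maximal squared overlap of s with computational-basis-aligned product states obtained by applying Hadamards to any subset T of qubits satisfies: max over T and x of 2^n |(∏_{i∈T}H(i) s)(x)|^2 = 2^{⌈n/2⌉}. -/

import Mathlib

open scoped Classical

noncomputable section Aux16

/-- character on ZMod 2 -/
def chi (a : ZMod 2) : ℝ := (-1 : ℝ) ^ a.val

lemma chi_add (a b : ZMod 2) : chi (a + b) = chi a * chi b := by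
  have h : ∀ c : ZMod 2, c = 0 ∨ c = 1 := by decide
  have e1 : ((1 : ZMod 2) + 1) = 0 := by decide
  have e2 : ZMod.val (1 : ZMod 2) = 1 := rfl
  rcases h a with ha | ha <;> rcases h b with hb | hb <;>
    subst ha <;> subst hb <;> simp [chi, e1, e2]

lemma chi_zero : chi 0 = 1 := by simp [chi]

lemma chi_sq (a : ZMod 2) : chi a ^ 2 = 1 := by
  have h : ∀ c : ZMod 2, c = 0 ∨ c = 1 := by decide
  have e2 : ZMod.val (1 : ZMod 2) = 1 := rfl
  rcases h a with ha | ha <;> subst ha <;> simp [chi, e2]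

lemma abs_chi (a : ZMod 2) : |chi a| = 1 := by
  have h : ∀ c : ZMod 2, c = 0 ∨ c = 1 := by decide
  rcases h a with ha | ha <;> subst ha <;> simp [chi]

/-- path quadratic form -/
def Qf (n : ℕ) (z : Fin n → ZMod 2) : ZMod 2 :=
  ∑ i : Fin (n - 1), z ⟨i.val, Nat.lt_of_lt_of_le i.isLt (Nat.sub_le n 1)⟩ * z ⟨i.val + 1, Nat.add_lt_of_lt_sub i.isLt⟩

/-- restricted character sum -/
def Gf (n : ℕ) (S : Finset (Fin n)) (b c : Fin n → ZMod 2) : ℝ :=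
  ∑ z : Fin n → ZMod 2,
    if ∀ j ∉ S, z j = b j then chi (Qf n z + ∑ i ∈ S, c i * z i) else 0

end Aux16

noncomputable section Aux16b
open Finset

lemma count_constraint (n : ℕ) (S : Finset (Fin n)) (b : Fin n → ZMod 2) :
    (∑ z : Fin n → ZMod 2, if ∀ j ∉ S, z j = b j then (1 : ℝ) else 0)
      = 2 ^ S.card := by
  have key : ∀ z : Fin n → ZMod 2,
      (if ∀ j ∉ S, z j = b j then (1 : ℝ) else 0)
        = ∏ j : Fin n, (if j ∈ S then (1 : ℝ) else if z j = b j then 1 else 0) := by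
    intro z
    by_cases h : ∀ j ∉ S, z j = b j
    · rw [if_pos h]
      refine (Finset.prod_eq_one fun j _ => ?_).symm
      by_cases hj : j ∈ S
      · simp [hj]
      · simp [hj, h j hj]
    · rw [if_neg h]
      push_neg at h
      obtain ⟨j, hj, hzj⟩ := h
      refine (Finset.prod_eq_zero (Finset.mem_univ j) ?_).symm
      simp [hj, hzj]
  simp_rw [key]
  rw [← Fintype.prod_sum (fun (j : Fin n) (v : ZMod 2) =>
    (if j ∈ S then (1 : ℝ) else if v = b j then 1 else 0))]
  have : ∀ j : Fin n, (∑ v : ZMod 2, if j ∈ S then (1 : ℝ) else if v = b j then 1 else 0)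
      = if j ∈ S then 2 else 1 := by
    intro j
    by_cases hj : j ∈ S
    · simp only [if_pos hj]
      norm_num
    · simp only [if_neg hj]
      rw [Finset.sum_ite_eq' Finset.univ (b j) (fun _ => (1:ℝ))]
      simp
  simp_rw [this]
  rw [Finset.prod_ite_mem Finset.univ S (fun _ => (2:ℝ))]
  simp [Finset.univ_inter]

lemma sum_pi_succ {M : Type*} [AddCommMonoid M] (n : ℕ) (f : (Fin (n + 1) → ZMod 2) → M) :
    ∑ z : Fin (n + 1) → ZMod 2, f z
      = ∑ a : ZMod 2, ∑ w : Fin n → ZMod 2, f (Fin.cons a w) := by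
  have h1 : ∑ z : Fin (n + 1) → ZMod 2, f z
      = ∑ p : ZMod 2 × (Fin n → ZMod 2), f (Fin.cons p.1 p.2) :=
    (Fintype.sum_equiv (Fin.consEquiv fun _ => ZMod 2) _ _ (fun p => rfl)).symm
  rw [h1, Fintype.sum_prod_type]

/-- the "shifted" subset -/
def Ssucc {n : ℕ} (S : Finset (Fin (n + 1))) : Finset (Fin n) :=
  Finset.univ.filter fun i => i.succ ∈ S

lemma card_Ssucc {n : ℕ} (S : Finset (Fin (n + 1))) :
    S.card = (Ssucc S).card + (if 0 ∈ S then 1 else 0) := by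
  classical
  have h2 : (Ssucc S).map ⟨Fin.succ, Fin.succ_injective n⟩ = S.erase 0 := by
    ext j
    refine Fin.cases ?_ ?_ j
    · simp [Ssucc, Fin.succ_ne_zero]
    · intro i
      simp [Ssucc, Fin.succ_ne_zero, Fin.succ_inj]
  have h3 : (Ssucc S).card = (S.erase 0).card := by
    rw [← h2, Finset.card_map]
  by_cases h0 : 0 ∈ S
  · rw [if_pos h0, h3, Finset.card_erase_of_mem h0]
    have := Finset.card_pos.mpr ⟨0, h0⟩
    omega
  · rw [if_neg h0, h3, Finset.erase_eq_of_notMem h0]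
    omega

lemma cond_cons {n : ℕ} (S : Finset (Fin (n + 1))) (b : Fin (n + 1) → ZMod 2)
    (a : ZMod 2) (w : Fin n → ZMod 2) :
    (∀ j ∉ S, Fin.cons (α := fun _ => ZMod 2) a w j = b j)
      ↔ ((0 ∉ S → a = b 0) ∧ ∀ j ∉ Ssucc S, w j = b j.succ) := by
  rw [Fin.forall_fin_succ (P := fun j => j ∉ S → Fin.cons (α := fun _ => ZMod 2) a w j = b j)]
  simp [Ssucc, Fin.cons_succ]

lemma lin_cons {n : ℕ} (S : Finset (Fin (n + 1))) (c : Fin (n + 1) → ZMod 2)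
    (a : ZMod 2) (w : Fin n → ZMod 2) :
    ∑ i ∈ S, c i * (Fin.cons (α := fun _ => ZMod 2) a w) i
      = (if 0 ∈ S then c 0 * a else 0) + ∑ i ∈ Ssucc S, c i.succ * w i := by
  classical
  have h1 : ∑ i ∈ S, c i * (Fin.cons (α := fun _ => ZMod 2) a w) i
      = ∑ i : Fin (n+1), if i ∈ S then c i * (Fin.cons (α := fun _ => ZMod 2) a w) i else 0 := by
    rw [Finset.sum_ite_mem, Finset.univ_inter]
  have hB : (∑ i : Fin n, if (Fin.succ i) ∈ S
        then c i.succ * (Fin.cons (α := fun _ => ZMod 2) a w) i.succ else 0)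
      = ∑ i ∈ Ssucc S, c i.succ * w i := by
    simp only [Fin.cons_succ, Ssucc]
    exact (Finset.sum_filter (fun i : Fin n => i.succ ∈ S) (fun i => c i.succ * w i)).symm
  rw [h1, Fin.sum_univ_succ, hB]
  simp [Fin.cons_zero]

lemma Qf_succ (m : ℕ) (z : Fin (m + 1) → ZMod 2) :
    Qf (m + 1) z = ∑ i : Fin m, z ⟨i.val, by omega⟩ * z ⟨i.val + 1, by omega⟩ := rfl

lemma Qf_cons (m : ℕ) (a : ZMod 2) (w : Fin (m + 1) → ZMod 2) :
    Qf (m + 2) (Fin.cons a w) = a * w 0 + Qf (m + 1) w := by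
  have hc : ∀ (k : ℕ) (h2 : k + 1 < m + 2),
      Fin.cons (α := fun _ => ZMod 2) a w ⟨k + 1, h2⟩ = w ⟨k, by omega⟩ :=
    fun k h2 => Fin.cons_succ (α := fun _ => ZMod 2) a w ⟨k, by omega⟩
  rw [Qf_succ (m + 1), Fin.sum_univ_succ]
  simp only [Fin.val_zero, Fin.val_succ, hc, Fin.mk_zero, Fin.cons_zero]
  rw [Qf_succ m]

lemma Qf_one (z : Fin 1 → ZMod 2) : Qf 1 z = 0 := by
  simp [Qf]

lemma Qf_zero (z : Fin 0 → ZMod 2) : Qf 0 z = 0 := by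
  simp [Qf]

end Aux16b

noncomputable section Aux16c
open Finset

lemma Gf_def (n : ℕ) (S : Finset (Fin n)) (b c : Fin n → ZMod 2) :
    Gf n S b c = ∑ z : Fin n → ZMod 2,
      if ∀ j ∉ S, z j = b j then chi (Qf n z + ∑ i ∈ S, c i * z i) else 0 := rfl

lemma G_split (m : ℕ) (S : Finset (Fin (m + 2))) (b c : Fin (m + 2) → ZMod 2) :
    Gf (m + 2) S b c = ∑ a : ZMod 2, ∑ w : Fin (m + 1) → ZMod 2,
      if ((0 ∉ S → a = b 0) ∧ ∀ j ∉ Ssucc S, w j = b j.succ)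
      then chi (a * w 0 + Qf (m + 1) w
        + ((if 0 ∈ S then c 0 * a else 0) + ∑ i ∈ Ssucc S, c i.succ * w i))
      else 0 := by
  rw [Gf_def, sum_pi_succ]
  refine Finset.sum_congr rfl fun a _ => Finset.sum_congr rfl fun w _ => ?_
  rw [Qf_cons, lin_cons]
  exact if_congr (cond_cons S b a w) rfl rfl

lemma G_case1 (m : ℕ) (S : Finset (Fin (m + 2))) (b c : Fin (m + 2) → ZMod 2)
    (h0 : 0 ∉ S) (h1 : 0 ∈ Ssucc S) :
    Gf (m + 2) S b c = Gf (m + 1) (Ssucc S) (fun i => b i.succ)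
      (Function.update (fun i => c i.succ) 0 (c 1 + b 0)) := by
  rw [G_split]
  have himp : ∀ a : ZMod 2, (0 ∉ S → a = b 0) ↔ a = b 0 :=
    fun a => ⟨fun h => h h0, fun h _ => h⟩
  simp only [himp, if_neg h0, ite_and]
  rw [Finset.sum_comm]
  rw [Gf_def]
  refine Finset.sum_congr rfl fun w _ => ?_
  rw [Finset.sum_ite_eq' Finset.univ (b 0)
    (fun a => if ∀ j ∉ Ssucc S, w j = b j.succ
      then chi (a * w 0 + Qf (m+1) w + (0 + ∑ i ∈ Ssucc S, c i.succ * w i)) else 0)]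
  rw [if_pos (Finset.mem_univ _)]
  refine if_congr Iff.rfl ?_ rfl
  congr 1
  have e1 : ∑ i ∈ Ssucc S, (Function.update (fun i => c i.succ) 0 (c 1 + b 0)) i * w i
      = (c 1 + b 0) * w 0 + ∑ i ∈ (Ssucc S).erase 0, c i.succ * w i := by
    rw [← Finset.add_sum_erase _ _ h1, Function.update_self]
    congr 1
    refine Finset.sum_congr rfl fun i hi => ?_
    rw [Function.update_of_ne (Finset.ne_of_mem_erase hi)]
  have e2 : ∑ i ∈ Ssucc S, c i.succ * w i
      = c 1 * w 0 + ∑ i ∈ (Ssucc S).erase 0, c i.succ * w i := by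
    rw [← Finset.add_sum_erase _ _ h1, Fin.succ_zero_eq_one]
  rw [e1, e2]
  ring

lemma G_case2 (m : ℕ) (S : Finset (Fin (m + 2))) (b c : Fin (m + 2) → ZMod 2)
    (h0 : 0 ∉ S) (h1 : 0 ∉ Ssucc S) :
    Gf (m + 2) S b c = chi (b 0 * b 1)
      * Gf (m + 1) (Ssucc S) (fun i => b i.succ) (fun i => c i.succ) := by
  rw [G_split]
  have himp : ∀ a : ZMod 2, (0 ∉ S → a = b 0) ↔ a = b 0 :=
    fun a => ⟨fun h => h h0, fun h _ => h⟩
  simp only [himp, if_neg h0, ite_and]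
  rw [Finset.sum_comm]
  rw [Gf_def, Finset.mul_sum]
  refine Finset.sum_congr rfl fun w _ => ?_
  rw [Finset.sum_ite_eq' Finset.univ (b 0)
    (fun a => if ∀ j ∉ Ssucc S, w j = b j.succ
      then chi (a * w 0 + Qf (m+1) w + (0 + ∑ i ∈ Ssucc S, c i.succ * w i)) else 0)]
  rw [if_pos (Finset.mem_univ _)]
  by_cases hP : ∀ j ∉ Ssucc S, w j = b j.succ
  · rw [if_pos hP, if_pos hP]
    have hw0 : w 0 = b (Fin.succ 0) := hP 0 h1
    have hb1 : b (Fin.succ 0) = b 1 := by norm_num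
    rw [hw0, hb1]
    rw [show b 0 * b 1 + Qf (m+1) w + (0 + ∑ i ∈ Ssucc S, c i.succ * w i)
        = b 0 * b 1 + (Qf (m+1) w + ∑ i ∈ Ssucc S, c i.succ * w i) by ring]
    rw [chi_add]
  · rw [if_neg hP, if_neg hP, mul_zero]

lemma chi_one : chi 1 = -1 := by
  have e2 : ZMod.val (1 : ZMod 2) = 1 := rfl
  rw [chi, e2, pow_one]

lemma sum_chi_mul (u : ZMod 2) :
    (∑ a : ZMod 2, chi (u * a)) = if u = 0 then 2 else 0 := by
  have hsum2 : (∑ a : ZMod 2, chi (u * a)) = chi (u * 0) + chi (u * 1) := by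
    rw [show (Finset.univ : Finset (ZMod 2)) = {0, 1} from by decide]
    rw [Finset.sum_insert (by decide), Finset.sum_singleton]
  rw [hsum2, mul_zero, mul_one, chi_zero]
  by_cases hu : u = 0
  · rw [if_pos hu, hu, chi_zero]; norm_num
  · have : u = 1 := by
      have h2 : ∀ v : ZMod 2, v ≠ 0 → v = 1 := by decide
      exact h2 u hu
    rw [if_neg hu, this, chi_one]; norm_num

lemma G_mem_split (m : ℕ) (S : Finset (Fin (m + 2))) (b c : Fin (m + 2) → ZMod 2)
    (h0 : 0 ∈ S) :
    Gf (m + 2) S b c = ∑ w : Fin (m + 1) → ZMod 2,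
      if ((∀ j ∉ Ssucc S, w j = b j.succ) ∧ w 0 = c 0)
      then 2 * chi (Qf (m + 1) w + ∑ i ∈ Ssucc S, c i.succ * w i) else 0 := by
  rw [G_split]
  have himp : ∀ a : ZMod 2, (0 ∉ S → a = b 0) ↔ True :=
    fun a => ⟨fun _ => trivial, fun _ h => absurd h0 h⟩
  simp only [himp, if_pos h0, true_and]
  rw [Finset.sum_comm]
  refine Finset.sum_congr rfl fun w _ => ?_
  by_cases hP : ∀ j ∉ Ssucc S, w j = b j.succ
  · simp only [if_pos hP, ite_and, if_pos hP]
    have hexp : ∀ a : ZMod 2,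
        a * w 0 + Qf (m+1) w + (c 0 * a + ∑ i ∈ Ssucc S, c i.succ * w i)
        = (w 0 + c 0) * a + (Qf (m+1) w + ∑ i ∈ Ssucc S, c i.succ * w i) := by
      intro a; ring
    simp only [hexp, chi_add]
    rw [← Finset.sum_mul, sum_chi_mul]
    by_cases hw : w 0 = c 0
    · have hz : w 0 + c 0 = 0 := by rw [hw, CharTwo.add_self_eq_zero]
      rw [if_pos hz, if_pos hw]
    · have hnz : ¬(w 0 + c 0 = 0) := by
        intro hz; apply hw
        have h2 : ∀ u v : ZMod 2, u + v = 0 → u = v := by decide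
        exact h2 _ _ hz
      rw [if_neg hnz, if_neg hw, zero_mul]
  · simp only [if_neg hP, ite_and, if_neg hP]
    simp

lemma G_case3 (m : ℕ) (S : Finset (Fin (m + 2))) (b c : Fin (m + 2) → ZMod 2)
    (h0 : 0 ∈ S) (h1 : 0 ∈ Ssucc S) :
    Gf (m + 2) S b c = 2 * chi (c 1 * c 0)
      * Gf (m + 1) ((Ssucc S).erase 0)
          (Function.update (fun i => b i.succ) 0 (c 0)) (fun i => c i.succ) := by
  rw [G_mem_split m S b c h0, Gf_def, Finset.mul_sum]
  refine Finset.sum_congr rfl fun w _ => ?_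
  have hcond : ((∀ j ∉ Ssucc S, w j = b j.succ) ∧ w 0 = c 0)
      ↔ (∀ j ∉ (Ssucc S).erase 0, w j = (Function.update (fun i => b i.succ) 0 (c 0)) j) := by
    constructor
    · rintro ⟨hP, hw⟩ j hj
      by_cases hj0 : j = 0
      · subst hj0; rw [Function.update_self]; exact hw
      · rw [Function.update_of_ne hj0]
        exact hP j (fun hjS => hj (Finset.mem_erase.mpr ⟨hj0, hjS⟩))
    · intro h
      constructor
      · intro j hj
        have hj' : j ∉ (Ssucc S).erase 0 := fun hmem => hj (Finset.mem_of_mem_erase hmem)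
        have hjne : j ≠ 0 := by rintro rfl; exact hj h1
        have := h j hj'
        rwa [Function.update_of_ne hjne] at this
      · have h0' : (0 : Fin (m+1)) ∉ (Ssucc S).erase 0 := fun hmem =>
          (Finset.mem_erase.mp hmem).1 rfl
        have := h 0 h0'
        rwa [Function.update_self] at this
  by_cases hPw : (∀ j ∉ Ssucc S, w j = b j.succ) ∧ w 0 = c 0
  · rw [if_pos hPw, if_pos (hcond.mp hPw)]
    have hL : ∑ i ∈ Ssucc S, c i.succ * w i
        = c 1 * c 0 + ∑ i ∈ (Ssucc S).erase 0, c i.succ * w i := by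
      rw [← Finset.add_sum_erase _ _ h1, Fin.succ_zero_eq_one, hPw.2]
    rw [hL, show Qf (m+1) w + (c 1 * c 0 + ∑ i ∈ (Ssucc S).erase 0, c i.succ * w i)
        = c 1 * c 0 + (Qf (m+1) w + ∑ i ∈ (Ssucc S).erase 0, c i.succ * w i) by ring]
    rw [chi_add]
    ring
  · rw [if_neg hPw, if_neg (fun h' => hPw (hcond.mpr h'))]
    ring

lemma G_case4 (m : ℕ) (S : Finset (Fin (m + 2))) (b c : Fin (m + 2) → ZMod 2)
    (h0 : 0 ∈ S) (h1 : 0 ∉ Ssucc S) (hbc : b 1 = c 0) :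
    Gf (m + 2) S b c = 2 * Gf (m + 1) (Ssucc S) (fun i => b i.succ) (fun i => c i.succ) := by
  rw [G_mem_split m S b c h0, Gf_def, Finset.mul_sum]
  refine Finset.sum_congr rfl fun w _ => ?_
  by_cases hP : ∀ j ∉ Ssucc S, w j = b j.succ
  · have hw : w 0 = c 0 := by
      have := hP 0 h1
      rwa [Fin.succ_zero_eq_one, hbc] at this
    rw [if_pos ⟨hP, hw⟩, if_pos hP]
  · rw [if_neg (fun h' => hP h'.1), if_neg hP, mul_zero]

lemma G_case5 (m : ℕ) (S : Finset (Fin (m + 2))) (b c : Fin (m + 2) → ZMod 2)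
    (h0 : 0 ∈ S) (h1 : 0 ∉ Ssucc S) (hbc : b 1 ≠ c 0) :
    Gf (m + 2) S b c = 0 := by
  rw [G_mem_split m S b c h0]
  refine Finset.sum_eq_zero fun w _ => ?_
  rw [if_neg]
  rintro ⟨hP, hw⟩
  apply hbc
  have := hP 0 h1
  rw [Fin.succ_zero_eq_one] at this
  rw [← this, hw]

end Aux16c

noncomputable section Aux16d
open Finset

lemma sq_Gf_le (n : ℕ) (S : Finset (Fin n)) (b c : Fin n → ZMod 2) :
    (Gf n S b c)^2 ≤ 2^(2 * S.card) := by
  have habs : |Gf n S b c| ≤ 2^S.card := by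
    rw [Gf_def]
    refine le_trans (Finset.abs_sum_le_sum_abs _ _) ?_
    rw [← count_constraint n S b]
    refine Finset.sum_le_sum fun z _ => ?_
    by_cases h : ∀ j ∉ S, z j = b j
    · rw [if_pos h, if_pos h, abs_chi]
    · rw [if_neg h, if_neg h, abs_zero]
  calc (Gf n S b c)^2 = |Gf n S b c|^2 := (sq_abs _).symm
    _ ≤ ((2:ℝ)^S.card)^2 := by
        apply pow_le_pow_left₀ (abs_nonneg _) habs
    _ = 2^(2*S.card) := by rw [← pow_mul]; ring_nf

lemma G_bound : ∀ (n : ℕ) (S : Finset (Fin n)) (b c : Fin n → ZMod 2),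
    ((∀ (h : 0 < n), (⟨0, h⟩ : Fin n) ∉ S) → (Gf n S b c)^2 ≤ 2^(S.card + n/2))
    ∧ (Gf n S b c)^2 ≤ 2^(S.card + (n+1)/2) := by
  intro n
  induction n with
  | zero =>
    intro S b c
    have hS : S.card = 0 := by
      rw [Finset.card_eq_zero]
      exact Finset.eq_empty_of_isEmpty S
    have h1 := sq_Gf_le 0 S b c
    rw [hS] at h1
    norm_num at h1
    refine ⟨fun _ => ?_, ?_⟩ <;> simpa [hS] using h1
  | succ k ih =>
    cases k with
    | zero =>
      intro S b c
      have h1 := sq_Gf_le 1 S b c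
      have hcard : S.card ≤ 1 := by
        have := Finset.card_le_card (Finset.subset_univ S)
        simpa using this
      constructor
      · intro h
        have h0 : (0 : Fin 1) ∉ S := by
          have := h (by norm_num)
          simpa using this
        have hS : S = ∅ := by
          ext j
          have hj : j = 0 := Fin.eq_zero j
          subst hj; simp [h0]
        rw [hS] at h1 ⊢
        simpa using h1
      · calc (Gf 1 S b c)^2 ≤ 2^(2*S.card) := h1
          _ ≤ 2^(S.card + 1) := by
              apply pow_le_pow_right₀ one_le_two
              omega
    | succ m =>
      intro S b c
      have hcard := card_Ssucc S
      by_cases h0 : (0 : Fin (m+2)) ∈ S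
      · have hcard' : S.card = (Ssucc S).card + 1 := by rw [hcard, if_pos h0]
        constructor
        · intro h
          have := h (by omega)
          rw [Fin.mk_zero] at this
          exact absurd h0 this
        · by_cases h1 : (0 : Fin (m+1)) ∈ Ssucc S
          · rw [G_case3 m S b c h0 h1]
            have hk := Finset.card_erase_add_one h1
            have IH := (ih ((Ssucc S).erase 0)
              (Function.update (fun i => b i.succ) 0 (c 0)) (fun i => c i.succ)).2
            calc (2 * chi (c 1 * c 0) * Gf (m+1) ((Ssucc S).erase 0)
                  (Function.update (fun i => b i.succ) 0 (c 0)) (fun i => c i.succ))^2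
                = 4 * (chi (c 1 * c 0))^2 * (Gf (m+1) ((Ssucc S).erase 0)
                  (Function.update (fun i => b i.succ) 0 (c 0)) (fun i => c i.succ))^2 := by
                  ring
              _ = 4 * (Gf (m+1) ((Ssucc S).erase 0)
                  (Function.update (fun i => b i.succ) 0 (c 0)) (fun i => c i.succ))^2 := by
                  rw [chi_sq]; ring
              _ ≤ 4 * 2^(((Ssucc S).erase 0).card + (m+2)/2) := by
                  have : (0:ℝ) ≤ 4 := by norm_num
                  exact mul_le_mul_of_nonneg_left IH this
              _ ≤ 2^(S.card + (m+3)/2) := by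
                  rw [show (4:ℝ) = 2^2 by norm_num, ← pow_add]
                  apply pow_le_pow_right₀ one_le_two
                  omega
          · by_cases hbc : b 1 = c 0
            · rw [G_case4 m S b c h0 h1 hbc]
              have IH := (ih (Ssucc S) (fun i => b i.succ) (fun i => c i.succ)).1
                (fun h => by rw [Fin.mk_zero]; exact h1)
              calc (2 * Gf (m+1) (Ssucc S) (fun i => b i.succ) (fun i => c i.succ))^2
                  = 4 * (Gf (m+1) (Ssucc S) (fun i => b i.succ) (fun i => c i.succ))^2 := by
                    ring
                _ ≤ 4 * 2^((Ssucc S).card + (m+1)/2) := by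
                    have : (0:ℝ) ≤ 4 := by norm_num
                    exact mul_le_mul_of_nonneg_left IH this
                _ ≤ 2^(S.card + (m+3)/2) := by
                    rw [show (4:ℝ) = 2^2 by norm_num, ← pow_add]
                    apply pow_le_pow_right₀ one_le_two
                    omega
            · rw [G_case5 m S b c h0 h1 hbc]
              norm_num
      · have hcard' : S.card = (Ssucc S).card := by
          rw [hcard, if_neg h0]
          omega
        have main : (Gf (m+2) S b c)^2 ≤ 2^(S.card + (m+2)/2) := by
          by_cases h1 : (0 : Fin (m+1)) ∈ Ssucc S
          · rw [G_case1 m S b c h0 h1]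
            have IH := (ih (Ssucc S) (fun i => b i.succ)
              (Function.update (fun i => c i.succ) 0 (c 1 + b 0))).2
            calc (Gf (m+1) (Ssucc S) (fun i => b i.succ)
                  (Function.update (fun i => c i.succ) 0 (c 1 + b 0)))^2
                ≤ 2^((Ssucc S).card + (m+2)/2) := IH
              _ ≤ 2^(S.card + (m+2)/2) := by
                  apply pow_le_pow_right₀ one_le_two
                  omega
          · rw [G_case2 m S b c h0 h1]
            have IH := (ih (Ssucc S) (fun i => b i.succ) (fun i => c i.succ)).1
              (fun h => by rw [Fin.mk_zero]; exact h1)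
            calc (chi (b 0 * b 1) * Gf (m+1) (Ssucc S) (fun i => b i.succ) (fun i => c i.succ))^2
                = (chi (b 0 * b 1))^2 * (Gf (m+1) (Ssucc S) (fun i => b i.succ) (fun i => c i.succ))^2 := by
                  ring
              _ = (Gf (m+1) (Ssucc S) (fun i => b i.succ) (fun i => c i.succ))^2 := by
                  rw [chi_sq]; ring
              _ ≤ 2^((Ssucc S).card + (m+1)/2) := IH
              _ ≤ 2^(S.card + (m+2)/2) := by
                  apply pow_le_pow_right₀ one_le_two
                  omega
        constructor
        · intro _; exact main
        · exact main.trans (pow_le_pow_right₀ one_le_two (by omega))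

end Aux16d

noncomputable section Aux16e
open Finset

lemma neg_one_pow_val (a : ZMod 2) : (-1 : ℝ) ^ a.val = chi a := rfl

lemma G_evens (n : ℕ) (b c : Fin n → ZMod 2)
    (hb : ∀ j, b j = 0) (hc : ∀ j, c j = 0) :
    Gf n (Finset.univ.filter fun i : Fin n => i.val % 2 = 0) b c
      = 2 ^ (Finset.univ.filter fun i : Fin n => i.val % 2 = 0).card := by
  set E := Finset.univ.filter fun i : Fin n => i.val % 2 = 0 with hE
  rw [Gf_def, ← count_constraint n E b]
  refine Finset.sum_congr rfl fun z _ => ?_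
  by_cases h : ∀ j ∉ E, z j = b j
  · rw [if_pos h, if_pos h]
    have hz : ∀ j : Fin n, j.val % 2 = 1 → z j = 0 := by
      intro j hj
      have hjE : j ∉ E := by
        rw [hE, Finset.mem_filter]
        rintro ⟨-, h2⟩; omega
      rw [h j hjE, hb]
    have hQ : Qf n z = 0 := by
      show (∑ i : Fin (n - 1), z ⟨i.val, by omega⟩ * z ⟨i.val + 1, by omega⟩) = 0
      refine Finset.sum_eq_zero fun i _ => ?_
      by_cases hpar : i.val % 2 = 0
      · rw [hz ⟨i.val + 1, by omega⟩ (by simpa using by omega), mul_zero]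
      · rw [hz ⟨i.val, by omega⟩ (by simpa using by omega), zero_mul]
    have hL : (∑ i ∈ E, c i * z i) = 0 := by
      refine Finset.sum_eq_zero fun i _ => ?_
      rw [hc, zero_mul]
    rw [hQ, hL, add_zero, chi_zero]
  · rw [if_neg h, if_neg h]

lemma card_evens (n : ℕ) :
    (Finset.univ.filter fun i : Fin n => i.val % 2 = 0).card = (n + 1) / 2 := by
  have : ((n + 1) / 2) = (Finset.univ : Finset (Fin ((n+1)/2))).card := by
    rw [Finset.card_univ, Fintype.card_fin]
  rw [this]
  refine Finset.card_bij'
    (fun j hj => (⟨j.val / 2, by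
      have h1 := (Finset.mem_filter.mp hj).2
      have h2 := j.isLt
      omega⟩ : Fin ((n+1)/2)))
    (fun k _ => (⟨2 * k.val, by have := k.isLt; omega⟩ : Fin n)) ?_ ?_ ?_ ?_
  · intro a ha; exact Finset.mem_univ _
  · intro k _
    simp only [Finset.mem_filter]
    exact ⟨Finset.mem_univ _, by omega⟩
  · intro j hj
    have h1 := (Finset.mem_filter.mp hj).2
    apply Fin.ext
    simp only []
    omega
  · intro k _
    apply Fin.ext
    simp only []
    omega

end Aux16e

theorem stmt_16 (n : ℕ) (π : Equiv.Perm (Fin n))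
    (s : (Fin n → ZMod 2) → ℝ)
    (hs : ∀ x, s x = (Real.sqrt (2 ^ n))⁻¹ *
      (-1 : ℝ) ^ ((∑ i : Fin (n - 1),
        x (π ⟨i.val, by omega⟩) * x (π ⟨i.val + 1, by omega⟩)).val))
    (F : Finset (Fin n) → (Fin n → ZMod 2) → ℝ)
    (hF : ∀ T x, F T x = ((Real.sqrt 2)⁻¹) ^ T.card *
      ∑ y : Fin n → ZMod 2,
        (if ∀ j ∉ T, y j = x j
          then (-1 : ℝ) ^ ((∑ i ∈ T, x i * y i).val) else 0) * s y) :
    (⨆ T : Finset (Fin n), ⨆ x : Fin n → ZMod 2, (2 : ℝ) ^ n * (F T x) ^ 2)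
      = 2 ^ ((n + 1) / 2) := by
  classical
  have hFG : ∀ (T : Finset (Fin n)) (x : Fin n → ZMod 2),
      F T x = ((Real.sqrt 2)⁻¹) ^ T.card * (Real.sqrt (2 ^ n))⁻¹ *
        Gf n (T.image π.symm) (fun j => x (π j)) (fun j => x (π j)) := by
    intro T x
    rw [hF, mul_assoc]
    congr 1
    rw [Gf_def, Finset.mul_sum]
    refine (Fintype.sum_equiv (Equiv.arrowCongr π (Equiv.refl (ZMod 2)))
      (fun z => (Real.sqrt (2 ^ n))⁻¹ *
        (if ∀ j ∉ T.image π.symm, z j = x (π j)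
          then chi (Qf n z + ∑ i ∈ T.image π.symm, x (π i) * z i) else 0))
      _ (fun z => ?_)).symm
    rw [hs]
    simp only [Equiv.arrowCongr_apply, Equiv.coe_refl, Function.comp_def, id_eq]
    have hcond : (∀ j ∉ T.image π.symm, z j = x (π j))
        ↔ (∀ j ∉ T, z (π.symm j) = x j) := by
      constructor
      · intro h j hj
        have hj' : π.symm j ∉ T.image π.symm := by
          intro hmem
          obtain ⟨t, ht, hte⟩ := Finset.mem_image.mp hmem
          exact hj (by rwa [π.symm.injective hte] at ht)
        have := h _ hj'
        rwa [Equiv.apply_symm_apply] at this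
      · intro h i hi
        have hπi : π i ∉ T := by
          intro hmem
          exact hi (Finset.mem_image.mpr ⟨π i, hmem, Equiv.symm_apply_apply π i⟩)
        have := h _ hπi
        rwa [Equiv.symm_apply_apply] at this
    have hquad : (∑ i : Fin (n - 1),
        z (π.symm (π ⟨i.val, by omega⟩)) * z (π.symm (π ⟨i.val + 1, by omega⟩)))
        = Qf n z := by
      simp only [Equiv.symm_apply_apply]
      rfl
    have hlin : (∑ i ∈ T.image π.symm, x (π i) * z i)
        = ∑ i ∈ T, x i * z (π.symm i) := by
      rw [Finset.sum_image (fun a _ b _ h => π.symm.injective h)]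
      refine Finset.sum_congr rfl fun i _ => ?_
      rw [Equiv.apply_symm_apply]
    by_cases h : ∀ j ∉ T, z (π.symm j) = x j
    · rw [if_pos (hcond.mpr h), if_pos h, hlin]
      rw [neg_one_pow_val, neg_one_pow_val, hquad, chi_add]
      ring
    · rw [if_neg (fun hc => h (hcond.mp hc)), if_neg h]
      ring
  have hval : ∀ (T : Finset (Fin n)) (x : Fin n → ZMod 2),
      (2 : ℝ) ^ n * (F T x) ^ 2
        = (Gf n (T.image π.symm) (fun j => x (π j)) (fun j => x (π j))) ^ 2
            / 2 ^ (T.image π.symm).card := by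
    intro T x
    rw [hFG T x]
    have hcard : (T.image π.symm).card = T.card :=
      Finset.card_image_of_injective T π.symm.injective
    have hs2 : (Real.sqrt 2) ^ 2 = 2 := Real.sq_sqrt (by norm_num)
    have hsn : (Real.sqrt (2 ^ n)) ^ 2 = 2 ^ n := Real.sq_sqrt (by positivity)
    have e1 : (((Real.sqrt 2)⁻¹) ^ T.card) ^ 2 = ((2 : ℝ) ^ T.card)⁻¹ := by
      rw [← pow_mul, mul_comm T.card 2, pow_mul, inv_pow, hs2, inv_pow]
    have e2 : ((Real.sqrt (2 ^ n))⁻¹) ^ 2 = ((2 : ℝ) ^ n)⁻¹ := by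
      rw [inv_pow, hsn]
    rw [hcard]
    rw [mul_pow, mul_pow, e1, e2]
    have h2n : (0 : ℝ) < 2 ^ n := by positivity
    have h2T : (0 : ℝ) < 2 ^ T.card := by positivity
    field_simp
  have hub : ∀ (T : Finset (Fin n)) (x : Fin n → ZMod 2),
      (2 : ℝ) ^ n * (F T x) ^ 2 ≤ 2 ^ ((n + 1) / 2) := by
    intro T x
    rw [hval T x]
    have hG := (G_bound n (T.image π.symm) (fun j => x (π j)) (fun j => x (π j))).2
    rw [div_le_iff₀ (by positivity)]
    calc (Gf n (T.image π.symm) (fun j => x (π j)) (fun j => x (π j))) ^ 2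
        ≤ 2 ^ ((T.image π.symm).card + (n + 1) / 2) := hG
      _ = 2 ^ ((n + 1) / 2) * 2 ^ (T.image π.symm).card := by
          rw [← pow_add]; ring_nf
  have hach : ∃ (T : Finset (Fin n)) (x : Fin n → ZMod 2),
      (2 : ℝ) ^ n * (F T x) ^ 2 = 2 ^ ((n + 1) / 2) := by
    set E := Finset.univ.filter fun i : Fin n => i.val % 2 = 0 with hE
    refine ⟨E.image π, fun _ => 0, ?_⟩
    rw [hval]
    have himg : (E.image π).image π.symm = E := by
      rw [Finset.image_image]
      have : (π.symm ∘ π) = id := by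
        funext i; exact Equiv.symm_apply_apply π i
      rw [this, Finset.image_id]
    rw [himg]
    rw [G_evens n _ _ (fun j => rfl) (fun j => rfl)]
    rw [card_evens n]
    rw [← pow_mul]
    rw [show (n+1)/2 * 2 = (n+1)/2 + (n+1)/2 by ring]
    rw [pow_add]
    rw [mul_div_assoc, div_self (by positivity), mul_one]
  apply le_antisymm
  · exact ciSup_le fun T => ciSup_le fun x => hub T x
  · obtain ⟨T0, x0, h⟩ := hach
    calc (2 : ℝ) ^ ((n + 1) / 2) = 2 ^ n * (F T0 x0) ^ 2 := h.symm
      _ ≤ ⨆ x : Fin n → ZMod 2, (2 : ℝ) ^ n * (F T0 x) ^ 2 :=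
          le_ciSup (f := fun x : Fin n → ZMod 2 => (2 : ℝ) ^ n * (F T0 x) ^ 2)
            (Set.Finite.bddAbove (Set.finite_range _)) x0
      _ ≤ ⨆ T : Finset (Fin n), ⨆ x : Fin n → ZMod 2, (2 : ℝ) ^ n * (F T x) ^ 2 :=
          le_ciSup (f := fun T => ⨆ x : Fin n → ZMod 2, (2 : ℝ) ^ n * (F T x) ^ 2)
            (Set.Finite.bddAbove (Set.finite_range _)) T0
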